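/- For n ≥ 3, let J be a φ_n-injective, weakly connected quiver with a walk of length n−1. Then J is a blow-up of the directed cycle C_ℓ for some divisor ℓ of n: there is a partition of V(J) into nonempty sets B_0,…,B_{ℓ−1} such that every edge of J goes from some B_j to B_{j+1 mod ℓ}, and for every j and every x ∈ B_j, y ∈ B_{j+1 mod ℓ}, there is an edge from x to y. -/

import Mathlib

/-- A quiver: vertex set, edge set, source and target maps. -/
structure Quiv where
  V : Type
  E : Type
  s : E → V
  t : E → V

/-- A quiver homomorphism. -/
@[ext]
structure QuivHom (G H : Quiv) where
  onV : G.V → H.V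
  onE : G.E → H.E
  comm_s : ∀ e, H.s (onE e) = onV (G.s e)
  comm_t : ∀ e, H.t (onE e) = onV (G.t e)

/-- Identity quiver homomorphism. -/
def QuivHom.id (G : Quiv) : QuivHom G G :=
  ⟨_root_.id, _root_.id, fun _ => rfl, fun _ => rfl⟩

/-- Composition of quiver homomorphisms. -/
def QuivHom.comp {G H K : Quiv} (g : QuivHom H K) (f : QuivHom G H) : QuivHom G K :=
  ⟨g.onV ∘ f.onV, g.onE ∘ f.onE,
    fun e => by simp [Function.comp, g.comm_s, f.comm_s],
    fun e => by simp [Function.comp, g.comm_t, f.comm_t]⟩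

/-- The directed path `P_n` with vertices `a_0, …, a_{n-1}` and edges `a_i → a_{i+1}`. -/
def Quiv.path (n : ℕ) : Quiv :=
  ⟨Fin n, Fin (n - 1), fun i => ⟨i.val, by have := i.isLt; omega⟩,
    fun i => ⟨i.val + 1, by have := i.isLt; omega⟩⟩

/-- The directed cycle `C_n`. -/
def Quiv.cyc (n : ℕ) : Quiv :=
  ⟨Fin n, Fin n, _root_.id, fun i => ⟨(i.val + 1) % n, Nat.mod_lt _ i.pos⟩⟩

/-- The natural embedding `φ_n : P_n → C_n`. -/
def pathEmb (n : ℕ) : QuivHom (Quiv.path n) (Quiv.cyc n) where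
  onV := _root_.id
  onE := fun i => ⟨i.val, by have := i.isLt; omega⟩
  comm_s := fun e => rfl
  comm_t := fun e => by
    have he := e.isLt
    apply Fin.ext
    show (e.val + 1) % n = e.val + 1
    exact Nat.mod_eq_of_lt (by omega)

/-- `J` is `φ_n`-injective: every quiver map `P_n → J` factors through `φ_n`. -/
def PhiInj (n : ℕ) (J : Quiv) : Prop :=
  ∀ ψ : QuivHom (Quiv.path n) J, ∃ ψ' : QuivHom (Quiv.cyc n) J,
    ψ'.comp (pathEmb n) = ψ

/-- `v, e` form a walk of length `k` in `J` (only indices `< k` matter). -/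
def HasWalk (J : Quiv) (k : ℕ) (v : ℕ → J.V) (e : ℕ → J.E) : Prop :=
  ∀ i < k, J.s (e i) = v i ∧ J.t (e i) = v (i + 1)

/-- There is an edge from `a` to `b` in `J`. -/
def Quiv.Edge (J : Quiv) (a b : J.V) : Prop := ∃ f, J.s f = a ∧ J.t f = b

/-- A loaded quiver: an edge between every (ordered) pair of vertices. -/
def Quiv.Loaded (J : Quiv) : Prop := ∀ a b, J.Edge a b

/-- `H`, with partitions `A` of its vertices and `B` of its edges indexed by the
vertices and edges of `G`, is a blow-up of `G`. -/
def IsBlowup (G H : Quiv) (A : G.V → Set H.V) (B : G.E → Set H.E) : Prop :=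
  (∀ w, ∃! v, w ∈ A v) ∧ (∀ f, ∃! e, f ∈ B e) ∧
  (∀ e f, f ∈ B e → H.s f ∈ A (G.s e) ∧ H.t f ∈ A (G.t e)) ∧
  (∀ e x y, x ∈ A (G.s e) → y ∈ A (G.t e) → ∃ f ∈ B e, H.s f = x ∧ H.t f = y)

/-- Monomorphisms of quivers: injective vertex and edge maps. -/
def QuivHom.Mono {G H : Quiv} (f : QuivHom G H) : Prop :=
  Function.Injective f.onV ∧ Function.Injective f.onE

/-- A class of quiver morphisms. -/
def MorClass := ∀ D C : Quiv, Set (QuivHom D C)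

/-- `J` is injective with respect to a class of morphisms `Φ`. -/
def ClassInjective (Φ : MorClass) (J : Quiv) : Prop :=
  ∀ D C (φ : QuivHom D C), φ ∈ Φ D C → ∀ ψ : QuivHom D J,
    ∃ ψ' : QuivHom C J, ψ'.comp φ = ψ

/-- Undirected adjacency. -/
def Quiv.Adj (J : Quiv) (a b : J.V) : Prop := J.Edge a b ∨ J.Edge b a

/-- Weak connectivity. -/
def Quiv.WeaklyConnected (J : Quiv) : Prop :=
  ∀ a b : J.V, Relation.ReflTransGen J.Adj a b

/-- `J` has a closed walk of length `m`. -/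
def ClosedWalk (J : Quiv) (m : ℕ) : Prop :=
  ∃ v e, HasWalk J m v e ∧ v m = v 0

/-- Cyclic successor on `Fin ℓ`. -/
def finNext {ℓ : ℕ} (i : Fin ℓ) : Fin ℓ := ⟨(i.val + 1) % ℓ, Nat.mod_lt _ i.pos⟩

/-- Disjoint union (coproduct) of a family of quivers. -/
def Quiv.sigma {Λ : Type} (Jf : Λ → Quiv) : Quiv :=
  ⟨Σ l, (Jf l).V, Σ l, (Jf l).E,
    fun f => ⟨f.1, (Jf f.1).s f.2⟩, fun f => ⟨f.1, (Jf f.1).t f.2⟩⟩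

/-- A walk of length `k` from `a` to `b`. -/
def Wk (J : Quiv) (k : ℕ) (a b : J.V) : Prop :=
  ∃ v e, HasWalk J k v e ∧ v 0 = a ∧ v k = b

lemma wk_nonemptyE {J : Quiv} {k a b} (h : Wk J k a b) : Nonempty J.E := by
  obtain ⟨v, e, -⟩ := h; exact ⟨e 0⟩

lemma wk_zero {J : Quiv} (hE : Nonempty J.E) (a : J.V) : Wk J 0 a a :=
  ⟨fun _ => a, fun _ => Classical.choice hE, fun i hi => by omega, rfl, rfl⟩

lemma wk_zero_eq {J : Quiv} {a b : J.V} (h : Wk J 0 a b) : a = b := by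
  obtain ⟨v, e, -, h0, hk⟩ := h; rw [← h0, ← hk]

lemma wk_one {J : Quiv} {a b : J.V} (h : J.Edge a b) : Wk J 1 a b := by
  obtain ⟨f, hs, ht⟩ := h
  refine ⟨fun i => if i = 0 then a else b, fun _ => f, fun i hi => ?_, by simp, by simp⟩
  interval_cases i
  simp [hs, ht]

lemma wk_append {J : Quiv} {k m : ℕ} {a b c : J.V} (h1 : Wk J k a b) (h2 : Wk J m b c) :
    Wk J (k + m) a c := by
  obtain ⟨v, e, hw, hv0, hvk⟩ := h1
  obtain ⟨v', e', hw', hv0', hvk'⟩ := h2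
  refine ⟨fun i => if i ≤ k then v i else v' (i - k), fun i => if i < k then e i else e' (i - k),
    fun i hi => ?_, by simp [hv0], ?_⟩
  · dsimp only
    by_cases hik : i < k
    · obtain ⟨hs, ht⟩ := hw i hik
      rw [if_pos hik, if_pos (by omega : i ≤ k), if_pos (by omega : i + 1 ≤ k)]
      exact ⟨hs, ht⟩
    · push_neg at hik
      obtain ⟨hs, ht⟩ := hw' (i - k) (by omega)
      rw [if_neg (by omega : ¬ i < k), if_neg (by omega : ¬ i + 1 ≤ k)]
      constructor
      · rcases Nat.eq_or_lt_of_le hik with h' | h'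
        · have hik0 : i - k = 0 := by omega
          rw [hik0] at hs
          rw [hik0, if_pos (by omega : i ≤ k), hs, hv0', ← hvk, ← h']
        · rw [if_neg (by omega : ¬ i ≤ k)]; exact hs
      · rw [ht]; congr 1; omega
  · dsimp only
    by_cases hm : m = 0
    · subst hm
      rw [if_pos (by omega : k + 0 ≤ k), Nat.add_zero, hvk, ← hv0']
      exact hvk'
    · rw [if_neg (by omega : ¬ k + m ≤ k), Nat.add_sub_cancel_left]; exact hvk'

lemma wk_split {J : Quiv} {k m : ℕ} {a c : J.V} (h : Wk J (k + m) a c) :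
    ∃ b, Wk J k a b ∧ Wk J m b c := by
  obtain ⟨v, e, hw, hv0, hvk⟩ := h
  refine ⟨v k, ⟨v, e, fun i hi => hw i (by omega), hv0, rfl⟩,
    ⟨fun i => v (k + i), fun i => e (k + i), fun i hi => ?_, rfl, by rw [← hvk]⟩⟩
  obtain ⟨hs, ht⟩ := hw (k + i) (by omega)
  exact ⟨hs, by dsimp only; rw [ht, Nat.add_assoc]⟩

/-- φ_n-injectivity in walk terms: every walk of length n-1 closes up. -/
lemma wk_close {n : ℕ} {J : Quiv} (hn : 3 ≤ n) (hJ : PhiInj n J) {a b : J.V}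
    (h : Wk J (n - 1) a b) : J.Edge b a := by
  obtain ⟨v, e, hw, hv0, hvk⟩ := h
  set ψ : QuivHom (Quiv.path n) J :=
    ⟨fun i => v i.val, fun j => e j.val,
      fun j => (hw j.val j.isLt).1,
      fun j => (hw j.val j.isLt).2⟩ with hψ
  obtain ⟨ψ', hψ'⟩ := hJ ψ
  have hV : ∀ i : Fin n, ψ'.onV i = v i.val := by
    intro i
    have := congrArg QuivHom.onV hψ'
    exact congrFun this i
  refine ⟨ψ'.onE ⟨n - 1, by omega⟩, ?_, ?_⟩
  · erw [ψ'.comm_s]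
    show ψ'.onV ⟨n - 1, _⟩ = b
    rw [hV]; exact hvk
  · erw [ψ'.comm_t]
    have h0 : ((Quiv.cyc n).t ⟨n - 1, by omega⟩ : Fin n) = ⟨0, by omega⟩ := by
      apply Fin.ext
      show (n - 1 + 1) % n = 0
      have : n - 1 + 1 = n := by omega
      rw [this, Nat.mod_self]
    rw [h0, hV]; exact hv0

lemma wk_mul {J : Quiv} {s : ℕ} {x : J.V} (h : Wk J s x x) : ∀ j, Wk J (j * s) x x := by
  intro j
  induction j with
  | zero => simpa using wk_zero (wk_nonemptyE h) x
  | succ j ih => rw [Nat.succ_mul]; exact wk_append ih h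

/-- Reversal: a walk of length k(n-1) from a to b yields a walk of length k from b to a. -/
lemma wk_rev {n : ℕ} {J : Quiv} (hn : 3 ≤ n) (hJ : PhiInj n J) :
    ∀ (k : ℕ) {a b : J.V}, Wk J (k * (n - 1)) a b → Wk J k b a := by
  intro k
  induction k with
  | zero => intro a b h; have := wk_zero_eq (by simpa using h)
            subst this; simpa using h
  | succ k ih =>
    intro a b h
    rw [Nat.succ_mul] at h
    obtain ⟨c, h1, h2⟩ := wk_split h
    have hbc : J.Edge b c := wk_close hn hJ h2
    have : Wk J (1 + k) b a := wk_append (wk_one hbc) (ih h1)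
    rwa [Nat.add_comm] at this

/-- Descent: a walk of length (n-1)^(2t+2) from x to y yields an edge from x to y. -/
lemma wk_descent {n : ℕ} {J : Quiv} (hn : 3 ≤ n) (hJ : PhiInj n J) :
    ∀ (t : ℕ) {x y : J.V}, Wk J ((n - 1) ^ (2 * (t + 1))) x y → J.Edge x y := by
  intro t
  induction t with
  | zero =>
    intro x y h
    have h2 : (n - 1) ^ (2 * 1) = (n - 1) * (n - 1) := by ring
    rw [h2] at h
    exact wk_close hn hJ (wk_rev hn hJ (n - 1) h)
  | succ t ih =>
    intro x y h
    have h2 : (n - 1) ^ (2 * (t + 2)) = ((n - 1) ^ (2 * t + 3)) * (n - 1) := by ring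
    have h3 : (n - 1) ^ (2 * t + 3) = ((n - 1) ^ (2 * (t + 1))) * (n - 1) := by ring
    rw [h2] at h
    have := wk_rev hn hJ _ h
    rw [h3] at this
    exact ih (wk_rev hn hJ _ this)

/-- A vertex with an outgoing (n-1)-walk lies on a closed n-walk. -/
lemma good_of {n : ℕ} {J : Quiv} (hn : 3 ≤ n) (hJ : PhiInj n J) {x z : J.V}
    (h : Wk J (n - 1) x z) : Wk J n x x := by
  have h2 := wk_append h (wk_one (wk_close hn hJ h))
  rwa [show n - 1 + 1 = n by omega] at h2

lemma good_of_long {n m : ℕ} {J : Quiv} (hn : 3 ≤ n) (hJ : PhiInj n J) {x : J.V}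
    (hm : n - 1 ≤ m) (h : Wk J m x x) : Wk J n x x := by
  rw [show m = (n - 1) + (m - (n - 1)) by omega] at h
  obtain ⟨w, h1, -⟩ := wk_split h
  exact good_of hn hJ h1

lemma adj_good {n : ℕ} {J : Quiv} (hn : 3 ≤ n) (hJ : PhiInj n J) {b c : J.V}
    (hadj : J.Adj b c) (hb : Wk J n b b) : Wk J n c c := by
  rcases hadj with hbc | hcb
  · have hb2 : Wk J (2 + (n - 2)) b b := by rwa [show 2 + (n - 2) = n by omega]
    obtain ⟨w, h1, h2⟩ := wk_split hb2
    have h3 : Wk J ((n - 2) + 1) w c := wk_append h2 (wk_one hbc)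
    rw [show (n - 2) + 1 = n - 1 by omega] at h3
    have hcw : J.Edge c w := wk_close hn hJ h3
    have h4 : Wk J (1 + (n - 2)) c b := wk_append (wk_one hcw) h2
    rw [show 1 + (n - 2) = n - 1 by omega] at h4
    exact good_of hn hJ h4
  · have hb2 : Wk J ((n - 2) + 2) b b := by rwa [show (n - 2) + 2 = n by omega]
    obtain ⟨d, h1, -⟩ := wk_split hb2
    have h3 : Wk J (1 + (n - 2)) c d := wk_append (wk_one hcb) h1
    rw [show 1 + (n - 2) = n - 1 by omega] at h3
    exact good_of hn hJ h3

/-- From an edge c → b and a closed n-walk at b, get an (n-1)-walk from b to c. -/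
lemma walk_back {n : ℕ} {J : Quiv} (hn : 3 ≤ n) (hJ : PhiInj n J) {b c : J.V}
    (hcb : J.Edge c b) (hb : Wk J n b b) : Wk J (n - 1) b c := by
  have hb2 : Wk J ((n - 2) + 2) b b := by rwa [show (n - 2) + 2 = n by omega]
  obtain ⟨d, h1, -⟩ := wk_split hb2
  have h3 : Wk J (1 + (n - 2)) c d := wk_append (wk_one hcb) h1
  rw [show 1 + (n - 2) = n - 1 by omega] at h3
  have hdc : J.Edge d c := wk_close hn hJ h3
  have h4 : Wk J ((n - 2) + 1) b c := wk_append h1 (wk_one hdc)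
  rwa [show (n - 2) + 1 = n - 1 by omega] at h4

lemma wk_forward {n : ℕ} {J : Quiv} (hn : 3 ≤ n) {x : J.V}
    (hx : Wk J n x x) (k : ℕ) : ∃ z, Wk J k x z := by
  have h := wk_mul hx (k + 1)
  have hle : k ≤ (k + 1) * n :=
    le_trans (Nat.le_succ k) (Nat.le_mul_of_pos_right _ (by omega))
  rw [← Nat.add_sub_cancel' hle] at h
  obtain ⟨z, h1, -⟩ := wk_split h
  exact ⟨z, h1⟩

lemma smul_mem {S : ℕ → Prop} (h0 : S 0) (hadd : ∀ a b, S a → S b → S (a + b)) :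
    ∀ j s, S s → S (j * s) := by
  intro j s hs
  induction j with
  | zero => simpa using h0
  | succ j ih => rw [Nat.succ_mul]; exact hadd _ _ ih hs

/-- A submonoid of ℕ containing `u` and `u + ℓ`, all of whose elements are divisible
by `ℓ`, contains every multiple of `ℓ` that is at least `u * u`. -/
lemma submonoid_large {S : ℕ → Prop} (h0 : S 0) (hadd : ∀ a b, S a → S b → S (a + b))
    {ℓ u : ℕ} (hℓ : 0 < ℓ) (hu : S u) (huℓ : S (u + ℓ)) (hdvd : ∀ s, S s → ℓ ∣ s) :
    ∀ k, ℓ ∣ k → u * u ≤ k → S k := by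
  intro k hk _hbig
  obtain ⟨k', hk'⟩ := hk
  rcases Nat.eq_zero_or_pos u with hu0 | hu0
  · subst hu0
    have hSℓ : S ℓ := by simpa using huℓ
    rw [hk', Nat.mul_comm]
    exact smul_mem h0 hadd k' ℓ hSℓ
  · obtain ⟨u', hu'⟩ := hdvd u hu
    have hu'pos : 0 < u' := by
      rcases Nat.eq_zero_or_pos u' with h | h
      · subst h; omega
      · exact h
    set a := k' % u' with ha
    set mm := k' / u' with hmm
    have hk'big : u' * u' ≤ k' := by
      have h1 : ℓ * (u' * (ℓ * u')) ≤ ℓ * k' := by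
        calc ℓ * (u' * (ℓ * u')) = (ℓ * u') * (ℓ * u') := by ring
          _ = u * u := by rw [hu']
          _ ≤ k := _hbig
          _ = ℓ * k' := hk'
      have h2 : u' * (ℓ * u') ≤ k' := Nat.le_of_mul_le_mul_left h1 hℓ
      calc u' * u' ≤ u' * (ℓ * u') :=
            Nat.mul_le_mul_left _ (Nat.le_mul_of_pos_left _ hℓ)
        _ ≤ k' := h2
    have hmma : a < u' := Nat.mod_lt _ hu'pos
    have hmm2 : u' ≤ mm := (Nat.le_div_iff_mul_le hu'pos).mpr hk'big
    have ham : a ≤ mm := by omega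
    have key : a * (u + ℓ) + (mm - a) * u = k := by
      have hau : a * u ≤ mm * u := Nat.mul_le_mul_right _ ham
      obtain ⟨d, hd⟩ := Nat.exists_eq_add_of_le hau
      have e1 : a * (u + ℓ) + (mm - a) * u = a * ℓ + mm * u := by
        rw [Nat.mul_add, Nat.sub_mul, hd, Nat.add_sub_cancel_left]
        ring
      have h1 : a + mm * u' = k' := Nat.mod_add_div' k' u'
      rw [e1]
      calc a * ℓ + mm * u = a * ℓ + mm * (ℓ * u') := by rw [hu']
        _ = ℓ * (a + mm * u') := by ring
        _ = ℓ * k' := by rw [h1]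
        _ = k := hk'.symm
    rw [← key]
    exact hadd _ _ (smul_mem h0 hadd a _ huℓ) (smul_mem h0 hadd (mm - a) _ hu)

/-- structural characterization: a `φ_n`-injective weakly
connected quiver with a walk of length `n-1` is a blow-up of `C_ℓ` for some
`ℓ ∣ n`. -/
theorem structure_blowup_of_cycle (n : ℕ) (hn : 3 ≤ n) (J : Quiv)
    (hJ : PhiInj n J) (hc : J.WeaklyConnected)
    (hw : ∃ (v : ℕ → J.V) (e : ℕ → J.E), HasWalk J (n - 1) v e) :
    ∃ ℓ, ℓ ∣ n ∧ 0 < ℓ ∧ ∃ B : Fin ℓ → Set J.V,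
      (∀ x, ∃! i, x ∈ B i) ∧
      (∀ i, (B i).Nonempty) ∧
      (∀ f, ∃ i, J.s f ∈ B i ∧ J.t f ∈ B (finNext i)) ∧
      (∀ i x y, x ∈ B i → y ∈ B (finNext i) → J.Edge x y) := by
  classical
  obtain ⟨v, e, hwlk⟩ := hw
  have hE : Nonempty J.E := ⟨e 0⟩
  set v0 : J.V := v 0 with hv0def
  -- every vertex lies on a closed walk of length n
  have hgv0 : Wk J n v0 v0 := good_of hn hJ ⟨v, e, hwlk, rfl, rfl⟩
  have hgood : ∀ x : J.V, Wk J n x x := by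
    intro x
    have h := hc v0 x
    induction h with
    | refl => exact hgv0
    | tail _ hadj ih => exact adj_good hn hJ hadj ih
  -- J is strongly connected
  have hstep : ∀ b c : J.V, J.Adj b c → ∃ m, Wk J m b c := by
    intro b c hadj
    rcases hadj with h | h
    · exact ⟨1, wk_one h⟩
    · exact ⟨n - 1, walk_back hn hJ h (hgood b)⟩
  have hconn : ∀ x y : J.V, ∃ m, Wk J m x y := by
    intro x y
    have h := hc x y
    induction h with
    | refl => exact ⟨0, wk_zero hE x⟩
    | tail _ hadj ih =>
        obtain ⟨m1, h1⟩ := ih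
        obtain ⟨m2, h2⟩ := hstep _ _ hadj
        exact ⟨m1 + m2, wk_append h1 h2⟩
  -- the monoid of closed walk lengths at v0, and its "gcd" ℓ
  set S : ℕ → Prop := fun m => Wk J m v0 v0 with hSdef
  have hS0 : S 0 := wk_zero hE v0
  have hSadd : ∀ a b, S a → S b → S (a + b) := fun a b ha hb => wk_append ha hb
  have hSn : S n := hgood v0
  have hex : ∃ k, 0 < k ∧ ∃ s2, S (s2 + k) ∧ S s2 :=
    ⟨n, by omega, 0, by simpa using hSn, hS0⟩
  set ℓ := Nat.find hex with hldef
  obtain ⟨hlpos, u, huℓ, hu⟩ := Nat.find_spec hex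
  -- ℓ divides every difference of elements of S
  have hdiffdvd : ∀ k, (∃ s2, S (s2 + k) ∧ S s2) → ℓ ∣ k := by
    rintro k ⟨s2, hs1, hs2⟩
    by_contra hnd
    have hcpos : 0 < k % ℓ :=
      Nat.pos_of_ne_zero (fun h => hnd (Nat.dvd_of_mod_eq_zero h))
    have hclt : k % ℓ < ℓ := Nat.mod_lt _ hlpos
    have h1 := Nat.div_add_mod k ℓ
    have hqc : (k / ℓ) * ℓ = ℓ * (k / ℓ) := Nat.mul_comm _ _
    refine Nat.find_min hex hclt ⟨hcpos, ⟨s2 + (k / ℓ) * (u + ℓ), ?_, ?_⟩⟩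
    · have he : s2 + (k / ℓ) * (u + ℓ) + k % ℓ = (s2 + k) + (k / ℓ) * u := by
        rw [Nat.mul_add, hqc]
        linarith [h1]
      rw [he]
      exact hSadd _ _ hs1 (smul_mem hS0 hSadd (k / ℓ) _ hu)
    · exact hSadd _ _ hs2 (smul_mem hS0 hSadd (k / ℓ) _ huℓ)
  have hSdvd : ∀ s, S s → ℓ ∣ s := fun s hs => hdiffdvd s ⟨0, by simpa using hs, hS0⟩
  have hndvd : ℓ ∣ n := hdiffdvd n ⟨0, by simpa using hSn, hS0⟩
  -- walk lengths from v0 to a fixed vertex have a well-defined residue mod ℓ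
  have hres : ∀ (x : J.V) (m m' : ℕ), Wk J m v0 x → Wk J m' v0 x → m % ℓ = m' % ℓ := by
    intro x m m' h h'
    obtain ⟨r, hr⟩ := hconn x v0
    have h1 : (m + r) ≡ 0 [MOD ℓ] :=
      (Nat.modEq_zero_iff_dvd).mpr (hSdvd _ (wk_append h hr))
    have h2 : (m' + r) ≡ 0 [MOD ℓ] :=
      (Nat.modEq_zero_iff_dvd).mpr (hSdvd _ (wk_append h' hr))
    exact Nat.ModEq.add_right_cancel' r (h1.trans h2.symm)
  refine ⟨ℓ, hndvd, hlpos, fun i => {x | ∃ m, Wk J m v0 x ∧ m % ℓ = i.val},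
    ?_, ?_, ?_, ?_⟩
  · -- partition
    intro x
    obtain ⟨m, hm⟩ := hconn v0 x
    refine ⟨⟨m % ℓ, Nat.mod_lt _ hlpos⟩, ⟨m, hm, rfl⟩, ?_⟩
    rintro j ⟨m', hm', hj⟩
    apply Fin.ext
    show j.val = m % ℓ
    rw [← hj]
    exact hres x m' m hm' hm
  · -- nonempty
    intro i
    obtain ⟨z, hz⟩ := wk_forward hn (hgood v0) i.val
    exact ⟨z, ⟨i.val, hz, Nat.mod_eq_of_lt i.isLt⟩⟩
  · -- edges respect the partition
    intro f
    obtain ⟨m, hm⟩ := hconn v0 (J.s f)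
    refine ⟨⟨m % ℓ, Nat.mod_lt _ hlpos⟩, ⟨m, hm, rfl⟩,
      ⟨m + 1, wk_append hm (wk_one ⟨f, rfl, rfl⟩), ?_⟩⟩
    show (m + 1) % ℓ = (m % ℓ + 1) % ℓ
    exact (Nat.mod_modEq m ℓ).symm.add_right 1
  · -- completeness between consecutive classes
    rintro i x y ⟨a, hav, haℓ⟩ ⟨b, hbv, hbℓ⟩
    obtain ⟨r, hr⟩ := hconn x v0
    have hSar : ℓ ∣ a + r := hSdvd _ (wk_append hav hr)
    -- r + b ≡ 1 [MOD ℓ]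
    have h1 : b ≡ a + 1 [MOD ℓ] := by
      show b % ℓ = (a + 1) % ℓ
      rw [hbℓ]
      show (i.val + 1) % ℓ = (a + 1) % ℓ
      rw [← haℓ]
      exact (Nat.mod_modEq a ℓ).add_right 1
    have h0 : (a + r) ≡ 0 [MOD ℓ] := (Nat.modEq_zero_iff_dvd).mpr hSar
    have hm1 : (r + b) ≡ 1 [MOD ℓ] := by
      refine Nat.ModEq.add_right_cancel' a ?_
      show ((r + b) + a) % ℓ = (1 + a) % ℓ
      have e1 : (r + b) + a = (a + r) + b := by ring
      have e2 : 1 + a = a + 1 := by ring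
      rw [e1, e2]
      have t1 : (a + r) + b ≡ 0 + b [MOD ℓ] := h0.add_right b
      rw [Nat.zero_add] at t1
      exact t1.trans h1
    -- choose a large power K = (n-1)^(2*tt)
    obtain ⟨NU, hNU⟩ : ∃ NU, u * u = NU := ⟨_, rfl⟩
    set tt := r + b + NU + 1 with htt
    obtain ⟨K, hKdef⟩ : ∃ K, (n - 1) ^ (2 * tt) = K := ⟨_, rfl⟩
    have hKbig : r + b + NU < K := by
      have h2t : tt < 2 ^ tt := Nat.lt_two_pow_self
      have hbase : 2 ≤ (n - 1) ^ 2 := by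
        have h4 : 2 * 2 ≤ (n - 1) * (n - 1) := Nat.mul_le_mul (by omega) (by omega)
        calc 2 ≤ 2 * 2 := by omega
          _ ≤ (n - 1) * (n - 1) := h4
          _ = (n - 1) ^ 2 := (sq (n - 1)).symm
      have hle : 2 ^ tt ≤ ((n - 1) ^ 2) ^ tt := Nat.pow_le_pow_left hbase tt
      have heq : ((n - 1) ^ 2) ^ tt = K := by rw [← pow_mul, hKdef]
      omega
    have hK1 : K ≡ 1 [MOD ℓ] := by
      have hsq : (n - 1) ^ 2 ≡ 1 [MOD ℓ] := by
        obtain ⟨p, rfl⟩ : ∃ p, n = p + 3 := ⟨n - 3, by omega⟩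
        have e1 : p + 3 - 1 = p + 2 := by omega
        have e2 : (p + 2) ^ 2 = (p + 3) * (p + 1) + 1 := by ring
        rw [e1, e2]
        have hdv : ℓ ∣ (p + 3) * (p + 1) := Dvd.dvd.mul_right hndvd _
        have := ((Nat.modEq_zero_iff_dvd).mpr hdv).add_right 1
        rwa [Nat.zero_add] at this
      have := (hsq.pow tt)
      rw [one_pow] at this
      rwa [← pow_mul, Nat.mul_comm 2 tt, Nat.mul_comm tt 2, hKdef] at this
    -- pad the walk x → v0 → y to length exactly K
    have hrbK : r + b ≤ K := by omega
    have hdvdp : ℓ ∣ K - (r + b) := by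
      have : (r + b) ≡ K [MOD ℓ] := hm1.trans hK1.symm
      exact (Nat.modEq_iff_dvd' hrbK).mp this
    have hSp : S (K - (r + b)) := by
      refine submonoid_large hS0 hSadd hlpos hu huℓ hSdvd _ hdvdp ?_
      omega
    have hwKxy : Wk J K x y := by
      have h2 := wk_append hr (wk_append hSp hbv)
      rwa [show r + ((K - (r + b)) + b) = K by omega] at h2
    -- descend to a single edge
    have htt1 : 2 * tt = 2 * ((tt - 1) + 1) := by omega
    refine wk_descent hn hJ (tt - 1) ?_
    rw [← htt1, hKdef]
    exact hwKxy
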